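/- Let G be a topological group whose topology is induced by a metric dist which is left-invariant (dist(g·x, g·y) = dist(x, y) for all g, x, y), and let μ be a left-invariant Borel measure on G (μ(g·A) = μ(A)) with 0 < μ(ball(x, r)) < ∞ for all x and r > 0. Let C ⊆ G be open and suppose there is a constant c > 0 such that μ(ball(1, r) ∩ C⁻¹) ≥ c·μ(ball(1, r)) for every r > 0. Let E ⊆ G satisfy E·C ⊆ E, and let D = {x ∈ G : μ(ball(x, r) ∩ E)/μ(ball(x, r)) → 1 as r → 0⁺} be the density-one set of E. Then D is open and D·C ⊆ D. -/

import Mathlib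

open MeasureTheory Metric Filter

/-- Let `G` be a topological group whose topology comes from a left-invariant metric,
with a left-invariant Borel measure `μ` giving positive finite measure to balls.
Let `C` be open with a uniform lower density bound `μ (ball 1 r ∩ C⁻¹) ≥ c • μ (ball 1 r)`
for all `r > 0`, and let `E` satisfy `E·C ⊆ E`.  Then the density-one set `D` of `E`
is open and satisfies `D·C ⊆ D`. -/
theorem density_one_set_open_and_cone_property
    {G : Type*} [Group G] [MetricSpace G] [IsTopologicalGroup G]
    [MeasurableSpace G] [BorelSpace G]
    (μ : Measure G)
    (hdist : ∀ g x y : G, dist (g * x) (g * y) = dist x y)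
    (hinv : ∀ (A : Set G) (g : G), MeasurableSet A → μ ((fun a => g * a) '' A) = μ A)
    (hball : ∀ (x : G) (r : ℝ), 0 < r → 0 < μ (ball x r) ∧ μ (ball x r) < ⊤)
    (C : Set G) (hCopen : IsOpen C)
    (c : ENNReal) (hc : 0 < c)
    (hlow : ∀ r : ℝ, 0 < r → c * μ (ball (1 : G) r) ≤ μ (ball (1 : G) r ∩ C⁻¹))
    (E : Set G) (hEC : ∀ x ∈ E, ∀ z ∈ C, x * z ∈ E) :
    IsOpen {x : G | Tendsto (fun r : ℝ => μ (ball x r ∩ E) / μ (ball x r))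
        (nhdsWithin 0 (Set.Ioi 0)) (nhds 1)} ∧
    (∀ x ∈ {x : G | Tendsto (fun r : ℝ => μ (ball x r ∩ E) / μ (ball x r))
        (nhdsWithin 0 (Set.Ioi 0)) (nhds 1)}, ∀ z ∈ C,
      x * z ∈ {x : G | Tendsto (fun r : ℝ => μ (ball x r ∩ E) / μ (ball x r))
        (nhdsWithin 0 (Set.Ioi 0)) (nhds 1)}) := by
  -- translation of balls
  have himg : ∀ (g : G) (r : ℝ), (fun a => g * a) '' ball (1 : G) r = ball g r := by
    intro g r
    ext y
    constructor
    · rintro ⟨a, ha, rfl⟩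
      have h2 : dist (g * a) g = dist a 1 := by simpa using hdist g a 1
      simpa [mem_ball, h2] using ha
    · intro hy
      refine ⟨g⁻¹ * y, ?_, by group⟩
      have : dist (g * (g⁻¹ * y)) (g * 1) = dist (g⁻¹ * y) 1 := hdist g _ 1
      simp only [mul_one, mul_inv_cancel_left] at this
      simpa [mem_ball, ← this] using hy
  have hball_eq : ∀ (g : G) (r : ℝ), μ (ball g r) = μ (ball (1 : G) r) := by
    intro g r
    rw [← himg g r, hinv _ _ measurableSet_ball]
  -- translated open sets
  have hopen_img : ∀ (g : G) (S : Set G), IsOpen S → IsOpen ((fun a => g * a) '' S) := by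
    intro g S hS
    have : (fun a => g * a) '' S = (fun a => g⁻¹ * a) ⁻¹' S := by
      ext y
      constructor
      · rintro ⟨a, ha, rfl⟩; simpa using ha
      · intro hy; exact ⟨g⁻¹ * y, hy, by group⟩
    rw [this]
    exact hS.preimage (continuous_const.mul continuous_id)
  have hCinv_open : IsOpen C⁻¹ := by
    have : C⁻¹ = Inv.inv ⁻¹' C := rfl
    rw [this]; exact hCopen.preimage continuous_inv
  -- products of E-points with cone points are interior points of E
  have hmemint : ∀ w ∈ E, ∀ z ∈ C, w * z ∈ interior E := by
    intro w hw z hz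
    refine mem_interior.mpr ⟨(fun a => w * a) '' C, ?_, hopen_img w C hCopen, ⟨z, hz, rfl⟩⟩
    rintro _ ⟨z', hz', rfl⟩
    exact hEC w hw z' hz'
  -- interior E ⊆ D
  have hIntE : ∀ u ∈ interior E,
      Tendsto (fun r : ℝ => μ (ball u r ∩ E) / μ (ball u r))
        (nhdsWithin 0 (Set.Ioi 0)) (nhds 1) := by
    intro u hu
    obtain ⟨ε, hε, hbu⟩ := Metric.isOpen_iff.mp isOpen_interior u hu
    have hev : (fun _ : ℝ => (1 : ENNReal)) =ᶠ[nhdsWithin 0 (Set.Ioi 0)]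
        (fun r : ℝ => μ (ball u r ∩ E) / μ (ball u r)) := by
      filter_upwards [Ioo_mem_nhdsGT_of_mem (show (0:ℝ) ∈ Set.Ico 0 ε from ⟨le_refl _, hε⟩)]
        with r hr
      have hsub : ball u r ⊆ E :=
        (ball_subset_ball hr.2.le).trans (hbu.trans interior_subset)
      rw [Set.inter_eq_left.mpr hsub,
        ENNReal.div_self (hball u r hr.1).1.ne' (hball u r hr.1).2.ne]
    exact Tendsto.congr' hev tendsto_const_nhds
  -- D ⊆ interior E
  have hD_sub : ∀ x, Tendsto (fun r : ℝ => μ (ball x r ∩ E) / μ (ball x r))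
      (nhdsWithin 0 (Set.Ioi 0)) (nhds 1) → x ∈ interior E := by
    intro x hx
    set c₀ : ENNReal := min c 1 with hc₀def
    have hc₀pos : 0 < c₀ := lt_min hc zero_lt_one
    have hc₀le1 : c₀ ≤ 1 := min_le_right _ _
    have hlt : (1 : ENNReal) - c₀ < 1 :=
      ENNReal.sub_lt_self ENNReal.one_ne_top one_ne_zero hc₀pos.ne'
    have key : ∃ w, w ∈ E ∧ w ∈ (fun a => x * a) '' C⁻¹ := by
      by_contra h
      push_neg at h
      have hb : ∀ᶠ r in nhdsWithin (0:ℝ) (Set.Ioi 0),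
          μ (ball x r ∩ E) / μ (ball x r) ≤ 1 - c₀ := by
        filter_upwards [self_mem_nhdsWithin] with r hr
        have hr : (0:ℝ) < r := hr
        set S : Set G := (fun a => x * a) '' C⁻¹ with hSdef
        have hSopen : IsOpen S := hopen_img x C⁻¹ hCinv_open
        set b : ENNReal := μ (ball (1 : G) r) with hbdef
        have hb0 : b ≠ 0 := (hball 1 r hr).1.ne'
        have hbt : b ≠ ⊤ := (hball 1 r hr).2.ne
        -- E ∩ ball ⊆ ball \ S
        have hsub : ball x r ∩ E ⊆ ball x r \ (ball x r ∩ S) := by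
          rintro y ⟨hy1, hy2⟩
          exact ⟨hy1, fun hy3 => h y hy2 hy3.2⟩
        -- measure of ball ∩ S
        have hmeasS : μ (ball x r ∩ S) = μ (ball (1:G) r ∩ C⁻¹) := by
          have : (fun a => x * a) '' (ball (1:G) r ∩ C⁻¹) = ball x r ∩ S := by
            rw [Set.image_inter (mul_right_injective x), himg]
          rw [← this, hinv _ _ (measurableSet_ball.inter hCinv_open.measurableSet)]
        have hSlow : c₀ * b ≤ μ (ball x r ∩ S) := by
          rw [hmeasS]
          exact le_trans (mul_le_mul_left (min_le_left c 1) b) (hlow r hr)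
        have hfin : μ (ball x r ∩ S) ≠ ⊤ :=
          ((measure_mono Set.inter_subset_left).trans_lt
            (by rw [hball_eq]; exact (hball 1 r hr).2)).ne
        have hdiff : μ (ball x r \ (ball x r ∩ S)) = μ (ball x r) - μ (ball x r ∩ S) :=
          measure_diff Set.inter_subset_left
            (measurableSet_ball.inter hSopen.measurableSet).nullMeasurableSet hfin
        have hle : μ (ball x r ∩ E) ≤ (1 - c₀) * b := by
          calc μ (ball x r ∩ E) ≤ μ (ball x r \ (ball x r ∩ S)) := measure_mono hsub
            _ = μ (ball x r) - μ (ball x r ∩ S) := hdiff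
            _ ≤ b - c₀ * b := by
                rw [hball_eq]; exact tsub_le_tsub_left hSlow b
            _ ≤ (1 - c₀) * b := by
                rw [tsub_le_iff_right, ← add_mul, tsub_add_cancel_of_le hc₀le1, one_mul]
        rw [hball_eq x r]
        exact ENNReal.div_le_of_le_mul hle
      have hgt : ∀ᶠ r in nhdsWithin (0:ℝ) (Set.Ioi 0),
          1 - c₀ < μ (ball x r ∩ E) / μ (ball x r) :=
        hx (isOpen_Ioi.mem_nhds hlt)
      obtain ⟨r, h1, h2⟩ := (hb.and hgt).exists
      exact absurd h1 (not_le.mpr h2)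
    obtain ⟨w, hwE, z, hzC, hwz⟩ := key
    have hzC' : z⁻¹ ∈ C := Set.mem_inv.mp hzC
    have : w * z⁻¹ = x := by rw [← hwz]; group
    rw [← this]
    exact hmemint w hwE z⁻¹ hzC'
  constructor
  · have : {x : G | Tendsto (fun r : ℝ => μ (ball x r ∩ E) / μ (ball x r))
        (nhdsWithin 0 (Set.Ioi 0)) (nhds 1)} = interior E :=
      Set.Subset.antisymm (fun x hx => hD_sub x hx) (fun u hu => hIntE u hu)
    rw [this]
    exact isOpen_interior
  · intro x hx z hz
    have hxE : x ∈ E := interior_subset (hD_sub x hx)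
    exact hIntE _ (hmemint x hxE z hz)
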